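/- The offline variant of graph orientation under uncertainty is NP-hard: given a graph G' = (V', E') with open intervals I_v and known precise weights w_v ∈ I_v such that for every edge {u,v} ∈ E', I_u ∩ I_v ≠ ∅, w_v ∉ I_u and w_u ∉ I_v, a set Q ⊆ V' is a feasible query set iff Q is a vertex cover of G'; hence computing a minimum feasible query set on such instances is exactly minimum vertex cover. In particular, in this configuration a query set determines the orientation of every edge iff it contains at least one endpoint of every edge. -/
import Mathlib


open Finset

/-- Lower endpoint of vertex `v`'s interval after querying the set `Q`. -/
def qlo {V : Type*} [DecidableEq V] (L w : V → ℝ) (Q : Finset V) (v : V) : ℝ :=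
  if v ∈ Q then w v else L v

/-- Upper endpoint of vertex `v`'s interval after querying the set `Q`. -/
def qhi {V : Type*} [DecidableEq V] (U w : V → ℝ) (Q : Finset V) (v : V) : ℝ :=
  if v ∈ Q then w v else U v

/-- The query set `Q` suffices to orient the hyperedge `S`: some vertex of `S`
has its (updated) interval weakly below all other (updated) intervals of `S`. -/
def Solves {V : Type*} [DecidableEq V] (L U w : V → ℝ) (Q : Finset V) (S : Finset V) : Prop :=
  ∃ m ∈ S, ∀ u ∈ S, u ≠ m → qhi U w Q m ≤ qlo L w Q u

theorem stmt19 {V : Type*} [DecidableEq V] (G : SimpleGraph V) (L U w : V → ℝ)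
    (hw : ∀ x : V, w x ∈ Set.Ioo (L x) (U x))
    (hedge : ∀ u v : V, G.Adj u v →
      (Set.Ioo (L u) (U u) ∩ Set.Ioo (L v) (U v)).Nonempty ∧
      w u ∉ Set.Ioo (L v) (U v) ∧ w v ∉ Set.Ioo (L u) (U u))
    (Q : Finset V) :
    (∀ u v : V, G.Adj u v →
        (qhi U w Q u ≤ qlo L w Q v ∨ qhi U w Q v ≤ qlo L w Q u)) ↔
    (∀ u v : V, G.Adj u v → u ∈ Q ∨ v ∈ Q) := by
  constructor
  · intro h u v huv
    by_contra hc
    push_neg at hc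
    obtain ⟨hu, hv⟩ := hc
    obtain ⟨⟨x, ⟨hx1, hx2⟩, ⟨hx3, hx4⟩⟩, _, _⟩ := hedge u v huv
    rcases h u v huv with h1 | h1 <;>
      simp [qhi, qlo, hu, hv] at h1 <;> linarith
  · intro h u v huv
    obtain ⟨_, hwu, hwv⟩ := hedge u v huv
    simp only [Set.mem_Ioo, not_and_or, not_lt] at hwu hwv
    have hu' := hw u
    have hv' := hw v
    simp only [Set.mem_Ioo] at hu' hv'
    rcases h u v huv with hu | hv
    · by_cases hv : v ∈ Q
      · simp [qhi, qlo, hu, hv]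
        rcases le_total (w u) (w v) with h' | h' <;> [left; right] <;> linarith
      · simp [qhi, qlo, hu, hv]
        rcases hwu with h' | h'
        · left; linarith
        · right; linarith
    · by_cases hu : u ∈ Q
      · simp [qhi, qlo, hu, hv]
        rcases le_total (w u) (w v) with h' | h' <;> [left; right] <;> linarith
      · simp [qhi, qlo, hu, hv]
        rcases hwv with h' | h'
        · right; linarith
        · left; linarith
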